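/- With five candidates A < B < C < D < E, single-peaked preferences, an odd number of voters, and Bloc voting with k = 2: if the winning set is {A,B}, then neither D nor E majority-defeats B; and if the winning set is {B,D}, then A does not majority-defeat B and E does not majority-defeat D. -/
import Mathlib


open Finset

/-- Each voter's preference is a strict total (linear) order on the candidates. -/
def StrictPrefs {m N : ℕ} (P : Fin N → Fin m → Fin m → Prop) : Prop :=
  ∀ v : Fin N, IsStrictTotalOrder (Fin m) (P v)

/-- Single-peakedness w.r.t. the left-right order on `Fin m`: for `i < j < k`,
no voter ranks both `C_i` and `C_k` above `C_j`. -/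
def SinglePeaked {m N : ℕ} (P : Fin N → Fin m → Fin m → Prop) : Prop :=
  ∀ (v : Fin N) (i j k : Fin m), i < j → j < k → ¬ (P v i j ∧ P v k j)

/-- Number of voters preferring `a` to `b`. -/
def prefCount {m N : ℕ} (P : Fin N → Fin m → Fin m → Prop)
    [∀ v a b, Decidable (P v a b)] (a b : Fin m) : ℕ :=
  (univ.filter fun v => P v a b).card

/-- `a` majority-defeats `b`: strictly more than `N/2` voters prefer `a` to `b`. -/
def Defeats {m N : ℕ} (P : Fin N → Fin m → Fin m → Prop)
    [∀ v a b, Decidable (P v a b)] (a b : Fin m) : Prop :=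
  2 * prefCount P a b > N

instance {m N : ℕ} (P : Fin N → Fin m → Fin m → Prop)
    [∀ v a b, Decidable (P v a b)] (a b : Fin m) : Decidable (Defeats P a b) :=
  inferInstanceAs (Decidable (2 * prefCount P a b > N))

/-- Voter `v` approves candidate `a` under Bloc voting with `k` winners:
`a` is among `v`'s top `k` candidates. -/
def Approves {m N : ℕ} (P : Fin N → Fin m → Fin m → Prop)
    [∀ v a b, Decidable (P v a b)] (k : ℕ) (v : Fin N) (a : Fin m) : Prop :=
  (univ.filter fun b => P v b a).card < k

instance {m N : ℕ} (P : Fin N → Fin m → Fin m → Prop)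
    [∀ v a b, Decidable (P v a b)] (k : ℕ) (v : Fin N) (a : Fin m) :
    Decidable (Approves P k v a) :=
  inferInstanceAs (Decidable ((univ.filter fun b => P v b a).card < k))

/-- Bloc score of candidate `a`: the number of voters who approve `a`. -/
def blocScore {m N : ℕ} (P : Fin N → Fin m → Fin m → Prop)
    [∀ v a b, Decidable (P v a b)] (k : ℕ) (a : Fin m) : ℕ :=
  (univ.filter fun v => Approves P k v a).card

/-- `W` is a winning set under Bloc voting with `k` winners (strict vote totals):
`W` has `k` members and each member has strictly more approvals than each non-member. -/
def IsWinningSet {m N : ℕ} (P : Fin N → Fin m → Fin m → Prop)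
    [∀ v a b, Decidable (P v a b)] (k : ℕ) (W : Finset (Fin m)) : Prop :=
  W.card = k ∧ ∀ w ∈ W, ∀ c ∉ W, blocScore P k w > blocScore P k c

set_option linter.unusedSectionVars false

section Aux
variable {N : ℕ} (P : Fin N → Fin 5 → Fin 5 → Prop) [∀ v a b, Decidable (P v a b)]

lemma my_approves_of {v : Fin N} {a : Fin 5}
    (h : ∀ x, P v x a → ∀ y, P v y a → x = y) :
    Approves P 2 v a := by
  have : (univ.filter fun b => P v b a).card ≤ 1 := by
    apply Finset.card_le_one.mpr
    intro x hx y hy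
    simp only [mem_filter, mem_univ, true_and] at hx hy
    exact h x hx y hy
  unfold Approves; omega

lemma my_not_approves {v : Fin N} {a x y : Fin 5} (hxy : x ≠ y)
    (hx : P v x a) (hy : P v y a) : ¬ Approves P 2 v a := by
  have hsub : ({x, y} : Finset (Fin 5)) ⊆ univ.filter (fun b => P v b a) := by
    intro b hb
    simp only [mem_insert, mem_singleton] at hb
    rcases hb with rfl | rfl <;> simp [hx, hy]
  have h2 : 2 ≤ (univ.filter fun b => P v b a).card := by
    calc 2 = ({x, y} : Finset (Fin 5)).card := (Finset.card_pair hxy).symm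
      _ ≤ _ := Finset.card_le_card hsub
  unfold Approves; omega

lemma my_score_gt {x y a b : Fin 5}
    (h : ∀ v, P v x y → Approves P 2 v a ∧ ¬ Approves P 2 v b)
    (hd : 2 * prefCount P x y > N) :
    blocScore P 2 b < blocScore P 2 a := by
  have h1 : prefCount P x y ≤ blocScore P 2 a := by
    apply Finset.card_le_card
    intro v hv
    simp only [mem_filter, mem_univ, true_and] at hv ⊢
    exact (h v hv).1
  have h2 : blocScore P 2 b ≤ N - prefCount P x y := by
    have hsub : univ.filter (fun v => Approves P 2 v b)
        ⊆ univ \ univ.filter (fun v => P v x y) := by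
      intro v hv
      simp only [mem_filter, mem_sdiff, mem_univ, true_and] at hv ⊢
      exact fun hvp => (h v hvp).2 hv
    calc blocScore P 2 b ≤ (univ \ univ.filter (fun v => P v x y)).card :=
          Finset.card_le_card hsub
      _ = N - prefCount P x y := by
          rw [Finset.card_sdiff_of_subset (Finset.filter_subset _ _), card_univ, Fintype.card_fin]
          rfl
  have h3 : prefCount P x y ≤ N := by
    have := Finset.card_filter_le (univ : Finset (Fin N)) (fun v => P v x y)
    simpa [prefCount] using this
  omega

end Aux
section Voter
variable {N : ℕ} {P : Fin N → Fin 5 → Fin 5 → Prop} [∀ v a b, Decidable (P v a b)]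

lemma my_asym (hP : StrictPrefs P) (v : Fin N) {a b : Fin 5} (h : P v a b) : ¬ P v b a := by
  haveI := hP v
  exact fun h' => irrefl_of (P v) a (trans_of (P v) h h')

lemma my_tri (hP : StrictPrefs P) (v : Fin N) {a b : Fin 5} (hne : a ≠ b)
    (hnb : ¬ P v b a) : P v a b := by
  haveI := hP v
  rcases trichotomous_of (P v) a b with h | h | h
  · exact h
  · exact absurd h hne
  · exact absurd h hnb

lemma key31 (hP : StrictPrefs P) (hSP : SinglePeaked P) (v : Fin N) (h31 : P v 3 1) :
    Approves P 2 v 3 ∧ ¬ Approves P 2 v 1 := by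
  haveI := hP v
  have h21 : P v 2 1 := by
    apply my_tri hP v (by decide)
    intro h12
    have h23 : P v 2 3 := by
      apply my_tri hP v (by decide)
      intro h32
      exact hSP v 1 2 3 (by decide) (by decide) ⟨h12, h32⟩
    exact my_asym hP v h31 (trans_of (P v) h12 h23)
  have h13' : ¬ P v 1 3 := my_asym hP v h31
  have h03' : ¬ P v 0 3 := fun h03 =>
    hSP v 0 1 3 (by decide) (by decide) ⟨trans_of (P v) h03 h31, h31⟩
  refine ⟨?_, my_not_approves P (by decide : (2:Fin 5) ≠ 3) h21 h31⟩
  apply my_approves_of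
  intro x hx y hy
  have hmem : ∀ z : Fin 5, P v z 3 → z = 2 ∨ z = 4 := by
    intro z hz
    fin_cases z
    · exact absurd hz h03'
    · exact absurd hz h13'
    · left; rfl
    · exact absurd hz (irrefl_of (P v) 3)
    · right; rfl
  rcases hmem x hx with rfl | rfl <;> rcases hmem y hy with rfl | rfl
  · rfl
  · exact absurd ⟨hx, hy⟩ (hSP v 2 3 4 (by decide) (by decide))
  · exact absurd ⟨hy, hx⟩ (hSP v 2 3 4 (by decide) (by decide))
  · rfl

lemma key41 (hP : StrictPrefs P) (hSP : SinglePeaked P) (v : Fin N) (h41 : P v 4 1) :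
    Approves P 2 v 3 ∧ ¬ Approves P 2 v 1 := by
  haveI := hP v
  have h31 : P v 3 1 := by
    apply my_tri hP v (by decide)
    intro h13
    have h34 : P v 3 4 := by
      apply my_tri hP v (by decide)
      intro h43
      exact hSP v 1 3 4 (by decide) (by decide) ⟨h13, h43⟩
    exact my_asym hP v h41 (trans_of (P v) h13 h34)
  exact key31 hP hSP v h31

lemma key01 (hP : StrictPrefs P) (hSP : SinglePeaked P) (v : Fin N) (h01 : P v 0 1) :
    Approves P 2 v 0 ∧ ¬ Approves P 2 v 3 := by
  haveI := hP v
  have h13 : P v 1 3 := my_tri hP v (by decide)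
    (fun h31 => hSP v 0 1 3 (by decide) (by decide) ⟨h01, h31⟩)
  have h12 : P v 1 2 := my_tri hP v (by decide)
    (fun h21 => hSP v 0 1 2 (by decide) (by decide) ⟨h01, h21⟩)
  have h23 : P v 2 3 := my_tri hP v (by decide)
    (fun h32 => hSP v 1 2 3 (by decide) (by decide) ⟨h12, h32⟩)
  have h34 : P v 3 4 := my_tri hP v (by decide)
    (fun h43 => hSP v 2 3 4 (by decide) (by decide) ⟨h23, h43⟩)
  refine ⟨?_, my_not_approves P (by decide : (1:Fin 5) ≠ 2) h13 h23⟩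
  apply my_approves_of
  intro x hx y hy
  exfalso
  have h02 : P v 0 2 := trans_of (P v) h01 h12
  have h03 : P v 0 3 := trans_of (P v) h02 h23
  have h04 : P v 0 4 := trans_of (P v) h03 h34
  clear hy
  fin_cases x
  · exact irrefl_of (P v) 0 hx
  · exact my_asym hP v h01 hx
  · exact my_asym hP v h02 hx
  · exact my_asym hP v h03 hx
  · exact my_asym hP v h04 hx

lemma key43 (hP : StrictPrefs P) (hSP : SinglePeaked P) (v : Fin N) (h43 : P v 4 3) :
    Approves P 2 v 4 ∧ ¬ Approves P 2 v 1 := by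
  haveI := hP v
  have h32 : P v 3 2 := my_tri hP v (by decide)
    (fun h23 => hSP v 2 3 4 (by decide) (by decide) ⟨h23, h43⟩)
  have h21 : P v 2 1 := my_tri hP v (by decide)
    (fun h12 => hSP v 1 2 3 (by decide) (by decide) ⟨h12, h32⟩)
  have h10 : P v 1 0 := my_tri hP v (by decide)
    (fun h01 => hSP v 0 1 2 (by decide) (by decide) ⟨h01, h21⟩)
  have h31 : P v 3 1 := trans_of (P v) h32 h21
  refine ⟨?_, my_not_approves P (by decide : (2:Fin 5) ≠ 3) h21 h31⟩
  apply my_approves_of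
  intro x hx y hy
  exfalso
  have h42 : P v 4 2 := trans_of (P v) h43 h32
  have h41 : P v 4 1 := trans_of (P v) h42 h21
  have h40 : P v 4 0 := trans_of (P v) h41 h10
  clear hy
  fin_cases x
  · exact my_asym hP v h40 hx
  · exact my_asym hP v h41 hx
  · exact my_asym hP v h42 hx
  · exact my_asym hP v h43 hx
  · exact irrefl_of (P v) 4 hx

end Voter
/-- With five candidates `A,B,C,D,E` (indices `0,...,4`) and Bloc
voting with `k = 2`: if the winning set is `{A,B}` then neither `D` nor `E`
majority-defeats `B`; if the winning set is `{B,D}` then `A` does not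
majority-defeat `B` and `E` does not majority-defeat `D`. -/
theorem five_candidates_AB_BD_partial_stability {N : ℕ}
    (P : Fin N → Fin 5 → Fin 5 → Prop) [∀ v a b, Decidable (P v a b)]
    (hP : StrictPrefs P) (hSP : SinglePeaked P) (hN : Odd N) :
    (IsWinningSet P 2 ({0, 1} : Finset (Fin 5)) →
      ¬ Defeats P 3 1 ∧ ¬ Defeats P 4 1) ∧
    (IsWinningSet P 2 ({1, 3} : Finset (Fin 5)) →
      ¬ Defeats P 0 1 ∧ ¬ Defeats P 4 3) := by
  constructor
  · intro hW
    have hB : blocScore P 2 1 > blocScore P 2 3 :=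
      hW.2 1 (by decide) 3 (by decide)
    constructor
    · intro hd
      have := my_score_gt P (fun v h => key31 hP hSP v h) hd
      omega
    · intro hd
      have := my_score_gt P (fun v h => key41 hP hSP v h) hd
      omega
  · intro hW
    constructor
    · intro hd
      have h1 : blocScore P 2 3 > blocScore P 2 0 :=
        hW.2 3 (by decide) 0 (by decide)
      have := my_score_gt P (fun v h => key01 hP hSP v h) hd
      omega
    · intro hd
      have h1 : blocScore P 2 1 > blocScore P 2 4 :=
        hW.2 1 (by decide) 4 (by decide)
      have := my_score_gt P (fun v h => key43 hP hSP v h) hd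
      omega
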